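/- Let E = E(n,c) be a uniform Cantor set, and suppose μ_P (determined by an ultimately 1-uniform n-matching sequence P) extends to a doubling measure ν on [0,1]. Then ∑_{k=1}^∞ n_k c_k < ∞. -/

import Mathlib

open Finset MeasureTheory Filter Topology
open scoped ENNReal NNReal

/-- Length of a level-`k` component of the uniform Cantor set `E(n,c)`. -/
noncomputable def cdelta (n : ℕ → ℕ) (c : ℕ → ℝ) (k : ℕ) : ℝ :=
  ∏ i ∈ Finset.Icc 1 k, (1 - ((n i : ℝ) - 1) * c i) / (n i : ℝ)

/-- Length of a level-`k` gap of the uniform Cantor set `E(n,c)`. -/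
noncomputable def ceps (n : ℕ → ℕ) (c : ℕ → ℝ) (k : ℕ) : ℝ :=
  c k * cdelta n c (k - 1)

/-- Left endpoint of the level-`k` component indexed by the word `w` (positions `1,…,k`). -/
noncomputable def leftpt (n : ℕ → ℕ) (c : ℕ → ℝ) (w : ℕ → ℕ) (k : ℕ) : ℝ :=
  ∑ j ∈ Finset.Icc 1 k, ((w j : ℝ) - 1) * (cdelta n c j + ceps n c j)

/-- `w` is a word of length `k`: `1 ≤ w j ≤ n j` for `1 ≤ j ≤ k`. -/
def IsWord (n : ℕ → ℕ) (w : ℕ → ℕ) (k : ℕ) : Prop :=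
  ∀ j, 1 ≤ j → j ≤ k → 1 ≤ w j ∧ w j ≤ n j

/-- The level-`k` component `I_w` of the uniform Cantor set. -/
noncomputable def cInt (n : ℕ → ℕ) (c : ℕ → ℝ) (w : ℕ → ℕ) (k : ℕ) : Set ℝ :=
  Set.Icc (leftpt n c w k) (leftpt n c w k + cdelta n c k)

/-- The set `E_k`, union of all level-`k` components. -/
def levelSet (n : ℕ → ℕ) (c : ℕ → ℝ) (k : ℕ) : Set ℝ :=
  ⋃ w ∈ {w : ℕ → ℕ | IsWord n w k}, cInt n c w k

/-- The uniform Cantor set `E(n,c) = ⋂_k E_k`. -/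
def uniformCantorSet (n : ℕ → ℕ) (c : ℕ → ℝ) : Set ℝ :=
  ⋂ k, levelSet n c k

/-- Standing assumptions on the data: `n_k ≥ 2`, `c_k ∈ (0,1)`, `(n_k - 1) c_k < 1`. -/
def CantorParams (n : ℕ → ℕ) (c : ℕ → ℝ) : Prop :=
  ∀ k, 1 ≤ k → 2 ≤ n k ∧ 0 < c k ∧ c k < 1 ∧ ((n k : ℝ) - 1) * c k < 1

/-- `p` is an `n`-matching sequence of positive probability vectors. -/
def MatchingSeq (n : ℕ → ℕ) (p : ℕ → ℕ → ℝ) : Prop :=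
  ∀ k, 1 ≤ k → (∀ i, 1 ≤ i → i ≤ n k → 0 < p k i) ∧ ∑ i ∈ Finset.Icc 1 (n k), p k i = 1

/-- `μ` is the Borel probability measure on `E(n,c)` determined by the matching sequence `p`:
`μ(I_{wi}) = p_{k,i} μ(I_w)`. -/
def MatchingMeasure (n : ℕ → ℕ) (c : ℕ → ℝ) (p : ℕ → ℕ → ℝ) (μ : Measure ℝ) : Prop :=
  IsProbabilityMeasure μ ∧ μ (uniformCantorSet n c)ᶜ = 0 ∧
    ∀ k, 1 ≤ k → ∀ w : ℕ → ℕ, IsWord n w (k - 1) → ∀ i, 1 ≤ i → i ≤ n k →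
      μ (cInt n c (Function.update w k i) k) =
        ENNReal.ofReal (p k i) * μ (cInt n c w (k - 1))

/-- `μ` is doubling with constant `C` on the metric space `E` (balls of `E`). -/
def DoublingOn (μ : Measure ℝ) (E : Set ℝ) (C : ℝ≥0∞) : Prop :=
  ∀ x ∈ E, ∀ r : ℝ, 0 < r →
    0 < μ (Metric.ball x (2 * r) ∩ E) ∧
      μ (Metric.ball x (2 * r) ∩ E) ≤ C * μ (Metric.ball x r ∩ E) ∧
      μ (Metric.ball x (2 * r) ∩ E) < ⊤

/-- The vector `(p 1, …, p k)` is `C`-uniform: any two adjacent (overlapping allowed) sums of `l`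
consecutive entries are comparable within the factor `C`. -/
def IsUniform (C : ℝ) (k : ℕ) (p : ℕ → ℝ) : Prop :=
  ∀ i j l : ℕ, i ≤ j → j ≤ i + l → j + l ≤ k →
    C⁻¹ * (∑ t ∈ Finset.Ioc j (j + l), p t) ≤ (∑ t ∈ Finset.Ioc i (i + l), p t) ∧
      (∑ t ∈ Finset.Ioc i (i + l), p t) ≤ C * ∑ t ∈ Finset.Ioc j (j + l), p t


/-! ### Auxiliary lemmas -/

section aux
variable {n : ℕ → ℕ} {c : ℕ → ℝ} {p : ℕ → ℕ → ℝ} {μ : Measure ℝ}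

lemma cdelta_zero : cdelta n c 0 = 1 := by simp [cdelta]

lemma cdelta_succ (k : ℕ) : cdelta n c (k+1)
    = cdelta n c k * ((1 - ((n (k+1) : ℝ) - 1) * c (k+1)) / (n (k+1) : ℝ)) :=
  Finset.prod_Icc_succ_top (Nat.one_le_iff_ne_zero.mpr (Nat.succ_ne_zero k)) _

lemma ceps_succ (k : ℕ) : ceps n c (k+1) = c (k+1) * cdelta n c k := rfl

variable (hnc : CantorParams n c)
include hnc

lemma npos {k : ℕ} (hk : 1 ≤ k) : (0:ℝ) < (n k : ℝ) := by
  have := (hnc k hk).1; positivity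

lemma numer_pos {k : ℕ} (hk : 1 ≤ k) : (0:ℝ) < 1 - ((n k : ℝ) - 1) * c k := by
  have := (hnc k hk).2.2.2; linarith

lemma cdelta_pos (k : ℕ) : 0 < cdelta n c k := by
  induction k with
  | zero => simp [cdelta_zero]
  | succ m ih =>
      rw [cdelta_succ]
      exact mul_pos ih (div_pos (numer_pos hnc (Nat.succ_le_succ (Nat.zero_le m)))
        (npos hnc (Nat.succ_le_succ (Nat.zero_le m))))

lemma ceps_pos (k : ℕ) : 0 < ceps n c (k+1) := by
  rw [ceps_succ]
  exact mul_pos (hnc (k+1) (Nat.succ_le_succ (Nat.zero_le k))).2.1 (cdelta_pos hnc k)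

lemma key_id (k : ℕ) :
    (n (k+1) : ℝ) * cdelta n c (k+1) + ((n (k+1) : ℝ) - 1) * ceps n c (k+1) = cdelta n c k := by
  have hn := npos hnc (Nat.succ_le_succ (Nat.zero_le k))
  rw [cdelta_succ, ceps_succ]
  field_simp
  ring

lemma n_cdelta_le (k : ℕ) : (n (k+1) : ℝ) * cdelta n c (k+1) ≤ cdelta n c k := by
  have h1 := key_id hnc k
  have h2 : 0 ≤ ((n (k+1) : ℝ) - 1) * ceps n c (k+1) := by
    have := (hnc (k+1) (Nat.succ_le_succ (Nat.zero_le k))).1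
    have h3 : (1:ℝ) ≤ (n (k+1):ℝ) := by exact_mod_cast Nat.one_le_of_lt this
    exact mul_nonneg (by linarith) (le_of_lt (ceps_pos hnc k))
  linarith

lemma cdelta_succ_le_half (k : ℕ) : cdelta n c (k+1) ≤ cdelta n c k / 2 := by
  have h1 := n_cdelta_le hnc k
  have h2 : (2:ℝ) ≤ (n (k+1):ℝ) := by exact_mod_cast (hnc (k+1) (Nat.succ_le_succ (Nat.zero_le k))).1
  have h3 := cdelta_pos hnc (k+1)
  nlinarith

lemma pi_pos (k : ℕ) : 0 < cdelta n c (k+1) + ceps n c (k+1) :=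
  add_pos (cdelta_pos hnc (k+1)) (ceps_pos hnc k)

lemma n_mul_pi_le (k : ℕ) :
    (n (k+1) : ℝ) * (cdelta n c (k+1) + ceps n c (k+1)) ≤ 2 * cdelta n c k := by
  have h1 := key_id hnc k
  have hc := (hnc (k+1) (Nat.succ_le_succ (Nat.zero_le k))).2.2.1
  have hcp := (hnc (k+1) (Nat.succ_le_succ (Nat.zero_le k))).2.1
  have hd := cdelta_pos hnc k
  have he : ceps n c (k+1) ≤ cdelta n c k := by
    rw [ceps_succ]; nlinarith
  nlinarith [ceps_pos hnc k]

lemma cdelta_lt_n_pi (k : ℕ) :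
    cdelta n c k < (n (k+1) : ℝ) * (cdelta n c (k+1) + ceps n c (k+1)) := by
  have h1 := key_id hnc k
  have he := ceps_pos hnc k
  nlinarith

lemma cdelta_le_pow (k m : ℕ) : cdelta n c (k+m) ≤ cdelta n c k * (1/2)^m := by
  induction m with
  | zero => simp
  | succ d ih =>
      have h1 := cdelta_succ_le_half hnc (k+d)
      have h2 : (0:ℝ) < (1/2:ℝ)^d := by positivity
      calc cdelta n c (k+(d+1)) ≤ cdelta n c (k+d) / 2 := h1
        _ ≤ (cdelta n c k * (1/2)^d) / 2 := by linarith
        _ = cdelta n c k * (1/2)^(d+1) := by ring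

omit hnc

lemma leftpt_zero (w : ℕ → ℕ) : leftpt n c w 0 = 0 := by simp [leftpt]

lemma leftpt_succ (w : ℕ → ℕ) (k : ℕ) : leftpt n c w (k+1)
    = leftpt n c w k + ((w (k+1) : ℝ) - 1) * (cdelta n c (k+1) + ceps n c (k+1)) :=
  Finset.sum_Icc_succ_top (Nat.one_le_iff_ne_zero.mpr (Nat.succ_ne_zero k)) _

lemma leftpt_congr {w w' : ℕ → ℕ} (k : ℕ) (hw : ∀ j, 1 ≤ j → j ≤ k → w j = w' j) :
    leftpt n c w k = leftpt n c w' k := by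
  unfold leftpt
  refine Finset.sum_congr rfl fun j hj => ?_
  rw [Finset.mem_Icc] at hj
  rw [hw j hj.1 hj.2]

lemma cInt_congr {w w' : ℕ → ℕ} (k : ℕ) (hw : ∀ j, 1 ≤ j → j ≤ k → w j = w' j) :
    cInt n c w k = cInt n c w' k := by
  unfold cInt; rw [leftpt_congr k hw]

lemma isWord_mono {w : ℕ → ℕ} {k m : ℕ} (h : IsWord n w k) (hm : m ≤ k) : IsWord n w m :=
  fun j h1 h2 => h j h1 (h2.trans hm)

lemma isWord_update {w : ℕ → ℕ} {k : ℕ} (h : IsWord n w k) {i : ℕ}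
    (h1 : 1 ≤ i) (h2 : i ≤ n (k+1)) : IsWord n (Function.update w (k+1) i) (k+1) := by
  intro j hj1 hj2
  rcases eq_or_ne j (k+1) with rfl | hne
  · simpa using ⟨h1, h2⟩
  · rw [Function.update_of_ne hne]
    exact h j hj1 (by omega)

include hnc

lemma leftpt_nonneg {w : ℕ → ℕ} {k : ℕ} (h : IsWord n w k) : 0 ≤ leftpt n c w k := by
  unfold leftpt
  refine Finset.sum_nonneg fun j hj => ?_
  rw [Finset.mem_Icc] at hj
  have h1 : 1 ≤ w j := (h j hj.1 hj.2).1
  have h1' : (1:ℝ) ≤ (w j : ℝ) := by exact_mod_cast h1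
  obtain ⟨j', rfl⟩ : ∃ j', j = j' + 1 := ⟨j - 1, by omega⟩
  exact mul_nonneg (by linarith) (le_of_lt (pi_pos hnc j'))

lemma leftpt_add_le {w : ℕ → ℕ} {k : ℕ} (h : IsWord n w k) :
    leftpt n c w k + cdelta n c k ≤ 1 := by
  induction k with
  | zero => simp [leftpt_zero, cdelta_zero]
  | succ m ih =>
      have hw : IsWord n w m := isWord_mono h (Nat.le_succ m)
      have h2 : (w (m+1) : ℝ) ≤ (n (m+1) : ℝ) := by
        exact_mod_cast (h (m+1) (Nat.succ_le_succ (Nat.zero_le m)) le_rfl).2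
      have hkey := key_id hnc m
      have hpi := pi_pos hnc m
      have step : leftpt n c w (m+1) + cdelta n c (m+1) ≤ leftpt n c w m + cdelta n c m := by
        rw [leftpt_succ]
        nlinarith
      linarith [ih hw]

omit hnc

lemma leftpt_update {w : ℕ → ℕ} (k : ℕ) (i : ℕ) :
    leftpt n c (Function.update w (k+1) i) (k+1)
      = leftpt n c w k + ((i:ℝ) - 1) * (cdelta n c (k+1) + ceps n c (k+1)) := by
  rw [leftpt_succ, Function.update_self]
  congr 1
  exact leftpt_congr k fun j h1 h2 => by rw [Function.update_of_ne (by omega)]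

/-! ### Measure lemmas -/

lemma sum_meas_le {ρ : Measure ℝ} {s : Finset ℕ} {f : ℕ → Set ℝ} {A : Set ℝ}
    (hm : ∀ i ∈ s, MeasurableSet (f i)) (hd : (s : Set ℕ).PairwiseDisjoint f)
    (hsub : ∀ i ∈ s, f i ⊆ A) : ∑ i ∈ s, ρ (f i) ≤ ρ A := by
  rw [← measure_biUnion_finset hd hm]
  exact measure_mono (Set.iUnion₂_subset hsub)

lemma cInt_zero (w : ℕ → ℕ) : cInt n c w 0 = Set.Icc 0 1 := by
  simp [cInt, leftpt, cdelta]

lemma cantor_subset_Icc : uniformCantorSet n c ⊆ Set.Icc 0 1 := by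
  intro x hx
  have h0 : x ∈ levelSet n c 0 := Set.mem_iInter.mp hx 0
  simp only [levelSet, Set.mem_iUnion] at h0
  obtain ⟨w, _, hw⟩ := h0
  rwa [cInt_zero] at hw

variable (hμ : MatchingMeasure n c p μ)
include hμ

lemma mu_Icc01 : μ (Set.Icc (0:ℝ) 1) = 1 := by
  haveI := hμ.1
  refine le_antisymm prob_le_one ?_
  have h1 : (1:ℝ≥0∞) = μ Set.univ := measure_univ.symm
  rw [h1]
  have h2 : (Set.univ : Set ℝ) ⊆ Set.Icc 0 1 ∪ (uniformCantorSet n c)ᶜ := by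
    intro x _
    by_cases hx : x ∈ uniformCantorSet n c
    · exact Or.inl (cantor_subset_Icc hx)
    · exact Or.inr hx
  calc μ Set.univ ≤ μ (Set.Icc 0 1 ∪ (uniformCantorSet n c)ᶜ) := measure_mono h2
    _ ≤ μ (Set.Icc 0 1) + μ (uniformCantorSet n c)ᶜ := measure_union_le _ _
    _ = μ (Set.Icc 0 1) := by rw [hμ.2.1, add_zero]

lemma mu_cInt_zero (w : ℕ → ℕ) : μ (cInt n c w 0) = 1 := by
  rw [cInt_zero]; exact mu_Icc01 hμ

lemma mu_child {w : ℕ → ℕ} {k : ℕ} (hw : IsWord n w k) {i : ℕ} (h1 : 1 ≤ i)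
    (h2 : i ≤ n (k+1)) :
    μ (cInt n c (Function.update w (k+1) i) (k+1))
      = ENNReal.ofReal (p (k+1) i) * μ (cInt n c w k) :=
  hμ.2.2 (k+1) (Nat.succ_le_succ (Nat.zero_le k)) w hw i h1 h2

lemma mu_rec {w : ℕ → ℕ} {k : ℕ} (hw : IsWord n w (k+1)) :
    μ (cInt n c w (k+1)) = ENNReal.ofReal (p (k+1) (w (k+1))) * μ (cInt n c w k) := by
  have hb := hw (k+1) (Nat.succ_le_succ (Nat.zero_le k)) le_rfl
  have := mu_child hμ (fun j hj1 hj2 => hw j hj1 (hj2.trans (Nat.le_succ k))) hb.1 hb.2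
  rwa [Function.update_eq_self] at this

lemma mu_ne_top (S : Set ℝ) : μ S ≠ ⊤ := by
  haveI := hμ.1
  exact (lt_of_le_of_lt prob_le_one (by norm_num)).ne

variable (hp : MatchingSeq n p)
include hp

lemma mu_pos {w : ℕ → ℕ} {k : ℕ} (hw : IsWord n w k) : 0 < μ (cInt n c w k) := by
  induction k with
  | zero => rw [mu_cInt_zero hμ]; exact one_pos
  | succ m ih =>
      rw [mu_rec hμ hw]
      have hb := hw (m+1) (Nat.succ_le_succ (Nat.zero_le m)) le_rfl
      have hppos := ((hp (m+1) (Nat.succ_le_succ (Nat.zero_le m))).1) (w (m+1)) hb.1 hb.2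
      exact ENNReal.mul_pos (ENNReal.ofReal_pos.mpr hppos).ne'
        (ih (fun j hj1 hj2 => hw j hj1 (hj2.trans (Nat.le_succ m)))).ne'

lemma mu_children_sum {w : ℕ → ℕ} {k : ℕ} (hw : IsWord n w k) :
    ∑ i ∈ Finset.Icc 1 (n (k+1)), μ (cInt n c (Function.update w (k+1) i) (k+1))
      = μ (cInt n c w k) := by
  have hs := hp (k+1) (Nat.succ_le_succ (Nat.zero_le k))
  calc ∑ i ∈ Finset.Icc 1 (n (k+1)), μ (cInt n c (Function.update w (k+1) i) (k+1))
      = ∑ i ∈ Finset.Icc 1 (n (k+1)), ENNReal.ofReal (p (k+1) i) * μ (cInt n c w k) := by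
        refine Finset.sum_congr rfl fun i hi => ?_
        rw [Finset.mem_Icc] at hi
        exact mu_child hμ hw hi.1 hi.2
    _ = (∑ i ∈ Finset.Icc 1 (n (k+1)), ENNReal.ofReal (p (k+1) i)) * μ (cInt n c w k) := by
        rw [Finset.sum_mul]
    _ = ENNReal.ofReal (∑ i ∈ Finset.Icc 1 (n (k+1)), p (k+1) i) * μ (cInt n c w k) := by
        rw [ENNReal.ofReal_sum_of_nonneg fun i hi => by
          rw [Finset.mem_Icc] at hi
          exact (hs.1 i hi.1 hi.2).le]
    _ = μ (cInt n c w k) := by rw [hs.2, ENNReal.ofReal_one, one_mul]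

end aux

section geo
variable {n : ℕ → ℕ} {c : ℕ → ℝ} {p : ℕ → ℕ → ℝ} {μ : Measure ℝ} {k₀ : ℕ}

/-- Extension of a word by all-1's beyond level `k`. -/
def cw (v : ℕ → ℕ) (k : ℕ) : ℕ → ℕ := fun t => if t ≤ k then v t else 1

lemma cw_eq_on {v : ℕ → ℕ} {k : ℕ} (j : ℕ) (hj : j ≤ k) : cw v k j = v j := if_pos hj

lemma cw_gt {v : ℕ → ℕ} {k j : ℕ} (hj : k < j) : cw v k j = 1 := if_neg (by omega)

variable (hnc : CantorParams n c)
include hnc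

lemma cw_isWord {v : ℕ → ℕ} {k : ℕ} (hv : IsWord n v k) (m : ℕ) : IsWord n (cw v k) m := by
  intro j h1 h2
  by_cases hj : j ≤ k
  · rw [cw_eq_on j hj]; exact hv j h1 hj
  · rw [cw_gt (by omega)]
    exact ⟨le_rfl, le_trans (by norm_num) (hnc j h1).1⟩

omit hnc

lemma cw_leftpt {v : ℕ → ℕ} {k m : ℕ} (hm : k ≤ m) :
    leftpt n c (cw v k) m = leftpt n c v k := by
  obtain ⟨d, rfl⟩ := Nat.exists_eq_add_of_le hm
  induction d with
  | zero => exact leftpt_congr k fun j _ hj => cw_eq_on j hj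
  | succ e ih =>
      have : k + (e+1) = (k+e) + 1 := rfl
      rw [this, leftpt_succ, ih (by omega), cw_gt (by omega)]
      norm_num

lemma cw_cInt_base {v : ℕ → ℕ} (k : ℕ) : cInt n c (cw v k) k = cInt n c v k :=
  cInt_congr k fun j _ hj => cw_eq_on j hj

/-- The bands `[z+(i-1)π, z+iπ)` are pairwise disjoint. -/
lemma bands_pd (z q : ℝ) :
    (Set.univ : Set ℕ).PairwiseDisjoint
      (fun i : ℕ => Set.Ico (z + ((i:ℝ)-1)*q) (z + (i:ℝ)*q)) := by
  intro i _ j _ hne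
  rw [Function.onFun, Set.Ico_disjoint_Ico]
  rcases lt_or_gt_of_ne hne with hlt | hlt
  · rcases le_or_gt q 0 with hq | hq
    · calc min (z + (i:ℝ)*q) (z + (j:ℝ)*q) ≤ z + (j:ℝ)*q := min_le_right _ _
        _ ≤ z + ((j:ℝ)-1)*q := by nlinarith
        _ ≤ max (z + ((i:ℝ)-1)*q) (z + ((j:ℝ)-1)*q) := le_max_right _ _
    · have hij : (i:ℝ) ≤ (j:ℝ) - 1 := by
        have : (i:ℝ) + 1 ≤ (j:ℝ) := by exact_mod_cast hlt
        linarith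
      calc min (z + (i:ℝ)*q) (z + (j:ℝ)*q) ≤ z + (i:ℝ)*q := min_le_left _ _
        _ ≤ z + ((j:ℝ)-1)*q := by nlinarith
        _ ≤ max (z + ((i:ℝ)-1)*q) (z + ((j:ℝ)-1)*q) := le_max_right _ _
  · rcases le_or_gt q 0 with hq | hq
    · calc min (z + (i:ℝ)*q) (z + (j:ℝ)*q) ≤ z + (i:ℝ)*q := min_le_left _ _
        _ ≤ z + ((i:ℝ)-1)*q := by nlinarith
        _ ≤ max (z + ((i:ℝ)-1)*q) (z + ((j:ℝ)-1)*q) := le_max_left _ _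
    · have hij : (j:ℝ) ≤ (i:ℝ) - 1 := by
        have : (j:ℝ) + 1 ≤ (i:ℝ) := by exact_mod_cast hlt
        linarith
      calc min (z + (i:ℝ)*q) (z + (j:ℝ)*q) ≤ z + (j:ℝ)*q := min_le_right _ _
        _ ≤ z + ((i:ℝ)-1)*q := by nlinarith
        _ ≤ max (z + ((i:ℝ)-1)*q) (z + ((j:ℝ)-1)*q) := le_max_left _ _

include hnc

lemma child_subset_band {w : ℕ → ℕ} (k : ℕ) (i : ℕ) :
    cInt n c (Function.update w (k+1) i) (k+1) ⊆
      Set.Ico (leftpt n c w k + ((i:ℝ)-1)*(cdelta n c (k+1) + ceps n c (k+1)))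
        (leftpt n c w k + (i:ℝ)*(cdelta n c (k+1) + ceps n c (k+1))) := by
  rw [cInt, leftpt_update]
  intro x hx
  rw [Set.mem_Icc] at hx
  rw [Set.mem_Ico]
  have he := ceps_pos hnc k
  constructor
  · exact hx.1
  · calc x ≤ leftpt n c w k + ((i:ℝ)-1)*(cdelta n c (k+1) + ceps n c (k+1)) + cdelta n c (k+1) :=
        hx.2
      _ < leftpt n c w k + (i:ℝ)*(cdelta n c (k+1) + ceps n c (k+1)) := by nlinarith

variable (hμ : MatchingMeasure n c p μ) (hp : MatchingSeq n p)
  (hk₀ : 1 ≤ k₀)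
  (huni : ∀ k, k₀ ≤ k → ∀ i, 1 ≤ i → i ≤ n k → p k i = 1 / (n k : ℝ))
include hμ hp hk₀ huni

/-- Half of a level-`j` component (the left part of length `δ_j`, right endpoint removed)
carries at least half of its measure. -/
lemma mu_half {j : ℕ} (hj : k₀ ≤ j) {u : ℕ → ℕ} (hu : IsWord n u j) :
    ENNReal.ofReal (1/2) * μ (cInt n c u j)
      ≤ μ (Set.Ico (leftpt n c u j) (leftpt n c u j + cdelta n c j)) := by
  set z := leftpt n c u j with hz
  set N := n (j+1) with hN
  have hN2 : 2 ≤ N := (hnc (j+1) (Nat.succ_le_succ (Nat.zero_le j))).1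
  have hNR : (2:ℝ) ≤ (N:ℝ) := by exact_mod_cast hN2
  set q := cdelta n c (j+1) + ceps n c (j+1) with hq
  have hqpos : 0 < q := pi_pos hnc j
  have hkey : (N:ℝ) * cdelta n c (j+1) + ((N:ℝ)-1) * ceps n c (j+1) = cdelta n c j :=
    key_id hnc j
  -- the first N-1 children are inside `Ico z (z + δ_j)`
  have hsub : ∀ i ∈ Finset.Icc 1 (N-1),
      cInt n c (Function.update u (j+1) i) (j+1) ⊆ Set.Ico z (z + cdelta n c j) := by
    intro i hi
    rw [Finset.mem_Icc] at hi
    refine (child_subset_band hnc j i).trans ?_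
    have hiR : (i:ℝ) ≤ (N:ℝ) - 1 := by
      have : (i:ℝ) ≤ ((N-1 : ℕ):ℝ) := by exact_mod_cast hi.2
      rw [Nat.cast_sub (by omega)] at this
      simpa using this
    have hi1 : (1:ℝ) ≤ (i:ℝ) := by exact_mod_cast hi.1
    intro x hx
    rw [Set.mem_Ico] at hx ⊢
    constructor
    · nlinarith [hx.1]
    · have h2 : (i:ℝ) * q ≤ ((N:ℝ)-1) * q := by nlinarith
      have h3 : ((N:ℝ)-1) * q + cdelta n c (j+1) = cdelta n c j := by
        rw [hq]; ring_nf; ring_nf at hkey; linarith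
      have h4 := cdelta_pos hnc (j+1)
      nlinarith [hx.2]
  have hdisj : ((Finset.Icc 1 (N-1) : Finset ℕ) : Set ℕ).PairwiseDisjoint
      (fun i => cInt n c (Function.update u (j+1) i) (j+1)) := by
    refine Set.PairwiseDisjoint.mono ?_ (fun i => child_subset_band hnc j i)
    exact (bands_pd z q).subset (Set.subset_univ _)
  have hmeas : ∀ i ∈ Finset.Icc 1 (N-1),
      MeasurableSet (cInt n c (Function.update u (j+1) i) (j+1)) :=
    fun i _ => measurableSet_Icc
  have hle := sum_meas_le (ρ := μ) hmeas hdisj hsub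
  -- each child has measure (1/N) μ(I_u)
  have hval : ∀ i ∈ Finset.Icc 1 (N-1),
      μ (cInt n c (Function.update u (j+1) i) (j+1))
        = ENNReal.ofReal (1/(N:ℝ)) * μ (cInt n c u j) := by
    intro i hi
    rw [Finset.mem_Icc] at hi
    rw [mu_child hμ hu hi.1 (by omega)]
    rw [huni (j+1) (by omega) i hi.1 (by omega)]
  rw [Finset.sum_congr rfl hval, Finset.sum_const, Nat.card_Icc] at hle
  have hcard : N - 1 + 1 - 1 = N - 1 := by omega
  rw [hcard, nsmul_eq_mul] at hle
  refine le_trans ?_ hle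
  rw [← mul_assoc]
  refine mul_le_mul_left ?_ _
  have : ((N-1:ℕ) : ℝ≥0∞) = ENNReal.ofReal ((N:ℝ) - 1) := by
    rw [← ENNReal.ofReal_natCast, Nat.cast_sub (by omega), Nat.cast_one]
  rw [this, ← ENNReal.ofReal_mul (by linarith)]
  refine ENNReal.ofReal_le_ofReal ?_
  have hNpos : (0:ℝ) < (N:ℝ) := by linarith
  rw [mul_one_div, le_div_iff₀ hNpos]
  linarith

end geo
set_option maxHeartbeats 1000000
section geo2
variable {n : ℕ → ℕ} {c : ℕ → ℝ} {p : ℕ → ℕ → ℝ} {μ : Measure ℝ} {k₀ : ℕ}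
variable (hnc : CantorParams n c) (hμ : MatchingMeasure n c p μ) (hp : MatchingSeq n p)
  (hk₀ : 1 ≤ k₀)
  (huni : ∀ k, k₀ ≤ k → ∀ i, 1 ≤ i → i ≤ n k → p k i = 1 / (n k : ℝ))
include hnc hμ hp hk₀ huni

/-- Measure of the all-1 extension of `v` below level `k`, compared with the length ratio. -/
lemma cw_mu {k : ℕ} (hk : k₀ ≤ k) {v : ℕ → ℕ} (hv : IsWord n v k) (d : ℕ) :
    ENNReal.ofReal (cdelta n c (k+d) / cdelta n c k) * μ (cInt n c v k)
      ≤ μ (cInt n c (cw v k) (k+d)) := by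
  induction d with
  | zero =>
      rw [Nat.add_zero, cw_cInt_base, div_self (cdelta_pos hnc k).ne', ENNReal.ofReal_one, one_mul]
  | succ e ih =>
      have hrec : μ (cInt n c (cw v k) (k+e+1))
          = ENNReal.ofReal (p (k+e+1) (cw v k (k+e+1))) * μ (cInt n c (cw v k) (k+e)) :=
        mu_rec hμ (cw_isWord hnc hv (k+e+1))
      have hv1 : cw v k (k+e+1) = 1 := cw_gt (by omega)
      have hunival : p (k+e+1) 1 = 1 / (n (k+e+1) : ℝ) := by
        refine huni (k+e+1) (by omega) 1 le_rfl ?_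
        have := (hnc (k+e+1) (by omega)).1
        omega
      have hke : k + (e+1) = (k+e)+1 := rfl
      rw [hke, hrec, hv1, hunival]
      have hnpos : (0:ℝ) < (n (k+e+1) : ℝ) := npos hnc (by omega)
      have hratio : cdelta n c (k+e+1) / cdelta n c k
          ≤ (1 / (n (k+e+1) : ℝ)) * (cdelta n c (k+e) / cdelta n c k) := by
        have h1 := n_cdelta_le hnc (k+e)
        have h2 := cdelta_pos hnc k
        have h3 : (1 / (n (k+e+1):ℝ)) * (cdelta n c (k+e) / cdelta n c k)
            = cdelta n c (k+e) / ((n (k+e+1):ℝ) * cdelta n c k) := by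
          field_simp
        rw [h3, div_le_div_iff₀ h2 (by positivity)]
        nlinarith
      calc ENNReal.ofReal (cdelta n c (k+e+1) / cdelta n c k) * μ (cInt n c v k)
          ≤ ENNReal.ofReal ((1 / (n (k+e+1) : ℝ)) * (cdelta n c (k+e) / cdelta n c k))
              * μ (cInt n c v k) :=
            mul_le_mul_left (ENNReal.ofReal_le_ofReal hratio) _
        _ = ENNReal.ofReal (1 / (n (k+e+1) : ℝ))
              * (ENNReal.ofReal (cdelta n c (k+e) / cdelta n c k) * μ (cInt n c v k)) := by
            rw [ENNReal.ofReal_mul (by positivity), mul_assoc]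
        _ ≤ ENNReal.ofReal (1 / (n (k+e+1) : ℝ)) * μ (cInt n c (cw v k) (k+e)) :=
            mul_le_mul_right ih _

/-- Key density estimate: an initial piece of length `h ≤ δ_k` of a level-`k` component
carries measure at least `(h / (8 δ_k)) μ(I_v)`. -/
lemma claimA {k : ℕ} (hk : k₀ ≤ k) {v : ℕ → ℕ} (hv : IsWord n v k)
    {h : ℝ} (hh0 : 0 < h) (hhd : h ≤ cdelta n c k) :
    ENNReal.ofReal (h / (8 * cdelta n c k)) * μ (cInt n c v k)
      ≤ μ (Set.Ico (leftpt n c v k) (leftpt n c v k + h)) := by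
  have hδk := cdelta_pos hnc k
  -- find the first level (beyond k) whose component length drops below h
  have hex : ∃ m, cdelta n c (k+1+m) ≤ h := by
    obtain ⟨m, hm⟩ := exists_pow_lt_of_lt_one (div_pos hh0 hδk) (by norm_num : (1/2:ℝ) < 1)
    refine ⟨m, ?_⟩
    have h1 := cdelta_le_pow hnc k (m+1)
    have h2 : ((1:ℝ)/2)^(m+1) ≤ (1/2)^m := by
      apply pow_le_pow_of_le_one (by norm_num) (by norm_num)
      omega
    have h3 : cdelta n c k * (1/2)^m < cdelta n c k * (h / cdelta n c k) := by
      exact mul_lt_mul_of_pos_left hm hδk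
    rw [mul_div_cancel₀ _ hδk.ne'] at h3
    have h4 : k + 1 + m = k + (m+1) := by omega
    rw [h4]
    nlinarith [pow_nonneg (by norm_num : (0:ℝ) ≤ 1/2) m]
  set m₀ := Nat.find hex with hm₀
  set jm := k + m₀ with hjm
  have hδj : cdelta n c (jm+1) ≤ h := by
    have := Nat.find_spec hex
    have he : k + 1 + m₀ = jm + 1 := by omega
    rwa [he] at this
  have hjmh : h ≤ cdelta n c jm := by
    rcases Nat.eq_zero_or_pos m₀ with h0 | h0
    · rw [hjm, h0, Nat.add_zero]; exact hhd
    · have := Nat.find_min hex (m := m₀ - 1) (by omega)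
      push_neg at this
      have he : k + 1 + (m₀ - 1) = jm := by omega
      rw [he] at this
      exact this.le
  have hkjm : k ≤ jm := by omega
  set z := leftpt n c v k with hzdef
  have hz1 : leftpt n c (cw v k) jm = z := cw_leftpt hkjm
  have hw1 : IsWord n (cw v k) jm := cw_isWord hnc hv jm
  set q := cdelta n c (jm+1) + ceps n c (jm+1) with hqdef
  have hqpos : 0 < q := pi_pos hnc jm
  set N := n (jm+1) with hNdef
  have hN2 : 2 ≤ N := (hnc (jm+1) (by omega)).1
  have hNR : (2:ℝ) ≤ (N:ℝ) := by exact_mod_cast hN2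
  have hNpos : (0:ℝ) < (N:ℝ) := by linarith
  have hnq : (N:ℝ) * q ≤ 2 * cdelta n c jm := n_mul_pi_le hnc jm
  have hδjm := cdelta_pos hnc jm
  have hδjm1 := cdelta_pos hnc (jm+1)
  have hchain : ENNReal.ofReal (cdelta n c jm / cdelta n c k) * μ (cInt n c v k)
      ≤ μ (cInt n c (cw v k) jm) := by
    have := cw_mu hnc hμ hp hk₀ huni hk hv m₀
    rwa [← hjm] at this
  by_cases hcase : h < 2*q
  · -- single-child case
    have hrec : μ (cInt n c (cw v k) (jm+1))
        = ENNReal.ofReal (1/(N:ℝ)) * μ (cInt n c (cw v k) jm) := by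
      rw [mu_rec hμ (cw_isWord hnc hv (jm+1)), cw_gt (by omega),
        huni (jm+1) (by omega) 1 le_rfl (by omega)]
    have hhalf := mu_half hnc hμ hp hk₀ huni (by omega : k₀ ≤ jm+1) (cw_isWord hnc hv (jm+1))
    have hz2 : leftpt n c (cw v k) (jm+1) = z := cw_leftpt (by omega)
    rw [hz2] at hhalf
    have hmono : μ (Set.Ico z (z + cdelta n c (jm+1))) ≤ μ (Set.Ico z (z + h)) :=
      measure_mono (Set.Ico_subset_Ico le_rfl (by linarith))
    refine le_trans (le_trans ?_ hhalf) hmono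
    calc ENNReal.ofReal (h / (8 * cdelta n c k)) * μ (cInt n c v k)
        ≤ ENNReal.ofReal ((1/2) * ((1/(N:ℝ)) * (cdelta n c jm / cdelta n c k)))
            * μ (cInt n c v k) := by
          refine mul_le_mul_left (ENNReal.ofReal_le_ofReal ?_) _
          rw [div_le_iff₀ (by positivity)]
          have expand : 1/2 * (1/(N:ℝ) * (cdelta n c jm / cdelta n c k)) * (8 * cdelta n c k)
              = 4 * cdelta n c jm / (N:ℝ) := by
            field_simp
            ring
          rw [expand, le_div_iff₀ hNpos]
          nlinarith
      _ = ENNReal.ofReal (1/2) * (ENNReal.ofReal (1/(N:ℝ))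
            * (ENNReal.ofReal (cdelta n c jm / cdelta n c k) * μ (cInt n c v k))) := by
          rw [ENNReal.ofReal_mul (by norm_num), ENNReal.ofReal_mul (by positivity),
            mul_assoc, mul_assoc]
      _ ≤ ENNReal.ofReal (1/2) * (ENNReal.ofReal (1/(N:ℝ)) * μ (cInt n c (cw v k) jm)) :=
          mul_le_mul_right (mul_le_mul_right hchain _) _
      _ = ENNReal.ofReal (1/2) * μ (cInt n c (cw v k) (jm+1)) := by rw [hrec]
  · -- multi-child case
    push_neg at hcase
    set L := Nat.floor (h/q) with hLdef
    have hL2 : 2 ≤ L := by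
      rw [hLdef]
      refine Nat.le_floor ?_
      rw [Nat.cast_ofNat, le_div_iff₀ hqpos]
      linarith
    have hLlt : L < N := by
      rw [hLdef]
      have : h / q < (N:ℝ) := by
        rw [div_lt_iff₀ hqpos]
        calc h ≤ cdelta n c jm := hjmh
          _ < (N:ℝ) * q := cdelta_lt_n_pi hnc jm
      exact Nat.floor_lt (by positivity) |>.mpr this
    have hLq : (L:ℝ) * q ≤ h := by
      rw [hLdef]
      have := Nat.floor_le (by positivity : (0:ℝ) ≤ h/q)
      calc ((Nat.floor (h/q) : ℕ):ℝ) * q ≤ (h/q) * q := by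
            exact mul_le_mul_of_nonneg_right this hqpos.le
        _ = h := div_mul_cancel₀ _ hqpos.ne'
    have hLge : h ≤ 2 * (L:ℝ) * q := by
      have h1 : h/q < (L:ℝ) + 1 := Nat.lt_floor_add_one _
      have h2 : (2:ℝ) ≤ (L:ℝ) := by exact_mod_cast hL2
      rw [div_lt_iff₀ hqpos] at h1
      nlinarith
    -- the first L children of the level-jm chain component lie in [z, z+h)
    have hsub : ∀ i ∈ Finset.Icc 1 L,
        cInt n c (Function.update (cw v k) (jm+1) i) (jm+1) ⊆ Set.Ico z (z + h) := by
      intro i hi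
      rw [Finset.mem_Icc] at hi
      refine (child_subset_band hnc jm i).trans ?_
      rw [hz1]
      have hi1 : (1:ℝ) ≤ (i:ℝ) := by exact_mod_cast hi.1
      have hiL : (i:ℝ) ≤ (L:ℝ) := by exact_mod_cast hi.2
      intro x hx
      rw [Set.mem_Ico] at hx ⊢
      constructor
      · nlinarith [hx.1]
      · calc x < z + (i:ℝ)*q := hx.2
          _ ≤ z + (L:ℝ)*q := by nlinarith
          _ ≤ z + h := by linarith
    have hdisj : ((Finset.Icc 1 L : Finset ℕ) : Set ℕ).PairwiseDisjoint
        (fun i => cInt n c (Function.update (cw v k) (jm+1) i) (jm+1)) := by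
      refine Set.PairwiseDisjoint.mono
        ((bands_pd (leftpt n c (cw v k) jm) q).subset (Set.subset_univ _))
        (fun i => child_subset_band hnc jm i)
    have hmeas : ∀ i ∈ Finset.Icc 1 L,
        MeasurableSet (cInt n c (Function.update (cw v k) (jm+1) i) (jm+1)) :=
      fun i _ => measurableSet_Icc
    have hle := sum_meas_le (ρ := μ) hmeas hdisj hsub
    have hval : ∀ i ∈ Finset.Icc 1 L,
        μ (cInt n c (Function.update (cw v k) (jm+1) i) (jm+1))
          = ENNReal.ofReal (1/(N:ℝ)) * μ (cInt n c (cw v k) jm) := by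
      intro i hi
      rw [Finset.mem_Icc] at hi
      rw [mu_child hμ hw1 hi.1 (by omega), huni (jm+1) (by omega) i hi.1 (by omega)]
    rw [Finset.sum_congr rfl hval, Finset.sum_const, Nat.card_Icc, Nat.add_sub_cancel,
      nsmul_eq_mul] at hle
    refine le_trans ?_ hle
    calc ENNReal.ofReal (h / (8 * cdelta n c k)) * μ (cInt n c v k)
        ≤ ENNReal.ofReal ((L:ℝ) * (1/(N:ℝ)) * (cdelta n c jm / cdelta n c k))
            * μ (cInt n c v k) := by
          refine mul_le_mul_left (ENNReal.ofReal_le_ofReal ?_) _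
          rw [div_le_iff₀ (by positivity)]
          have expand : (L:ℝ) * (1/(N:ℝ)) * (cdelta n c jm / cdelta n c k) * (8 * cdelta n c k)
              = 8 * (L:ℝ) * cdelta n c jm / (N:ℝ) := by
            field_simp
          rw [expand, le_div_iff₀ hNpos]
          have hLpos : (0:ℝ) < (L:ℝ) := by
            have : (2:ℝ) ≤ (L:ℝ) := by exact_mod_cast hL2
            linarith
          nlinarith
      _ = (L:ℝ≥0∞) * ENNReal.ofReal (1/(N:ℝ))
            * (ENNReal.ofReal (cdelta n c jm / cdelta n c k) * μ (cInt n c v k)) := by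
          rw [ENNReal.ofReal_mul (by positivity), ENNReal.ofReal_mul (by positivity),
            ENNReal.ofReal_natCast, mul_assoc, mul_assoc]
      _ ≤ (L:ℝ≥0∞) * ENNReal.ofReal (1/(N:ℝ)) * μ (cInt n c (cw v k) jm) :=
          mul_le_mul_right hchain _
      _ = (L:ℝ≥0∞) * (ENNReal.ofReal (1/(N:ℝ)) * μ (cInt n c (cw v k) jm)) := by
          rw [mul_assoc]

end geo2
section geo3
variable {n : ℕ → ℕ} {c : ℕ → ℝ} {p : ℕ → ℕ → ℝ} {μ ν : Measure ℝ} {k₀ : ℕ} {D : ℝ≥0∞}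
variable (hnc : CantorParams n c) (hμ : MatchingMeasure n c p μ) (hp : MatchingSeq n p)
  (hk₀ : 1 ≤ k₀)
  (huni : ∀ k, k₀ ≤ k → ∀ i, 1 ≤ i → i ≤ n k → p k i = 1 / (n k : ℝ))
  (hD1 : 1 ≤ D) (hDlt : D < ⊤) (hdOn : DoublingOn ν (Set.Icc 0 1) D)
  (hext : ν.restrict (uniformCantorSet n c) = μ)
include hnc hμ hp hk₀ huni hD1 hDlt hdOn hext

/-- Lower bound for the doubling measure of a level-`(k+1)` gap in terms of the matching
measure of the component to its right. -/
lemma nu_gap {k : ℕ} (hk : k₀ ≤ k) {w : ℕ → ℕ} (hw : IsWord n w k) {i : ℕ}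
    (hi1 : 1 ≤ i) (hiN : i < n (k+1)) :
    D⁻¹ * ENNReal.ofReal ((n (k+1):ℝ) * c (k+1) / 16)
        * μ (cInt n c (Function.update w (k+1) (i+1)) (k+1))
      ≤ ν (Set.Ioo (leftpt n c (Function.update w (k+1) (i+1)) (k+1) - ceps n c (k+1))
            (leftpt n c (Function.update w (k+1) (i+1)) (k+1))) := by
  have hupd : IsWord n (Function.update w (k+1) (i+1)) (k+1) :=
    isWord_update hw (by omega) (by omega)
  set z := leftpt n c (Function.update w (k+1) (i+1)) (k+1) with hzdef
  set ε := ceps n c (k+1) with hεdef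
  have hεpos : 0 < ε := ceps_pos hnc k
  have hδ1 := cdelta_pos hnc (k+1)
  have hδk := cdelta_pos hnc k
  have hN2 : 2 ≤ n (k+1) := (hnc (k+1) (by omega)).1
  have hNR : (2:ℝ) ≤ ((n (k+1)):ℝ) := by exact_mod_cast hN2
  have hcpos := (hnc (k+1) (by omega)).2.1
  have hnc1 := (hnc (k+1) (by omega)).2.2.2
  set r := ε / 2 with hrdef
  have hrpos : 0 < r := by positivity
  -- the center of the gap-ball lies in [0,1]
  have hz0 : 0 ≤ z - ε := by
    rw [hzdef, leftpt_update]
    have hl0 : 0 ≤ leftpt n c w k := leftpt_nonneg hnc hw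
    have hi1R : (1:ℝ) ≤ ((i+1 : ℕ):ℝ) := by exact_mod_cast Nat.le_add_left 1 i
    have hπ : ε ≤ ((i+1 : ℕ):ℝ) * (cdelta n c (k+1) + ε) - cdelta n c (k+1) - ε + ε + cdelta n c (k+1) := by
      push_cast
      nlinarith [hδ1.le, hεpos.le, (by exact_mod_cast hi1 : (1:ℝ) ≤ (i:ℝ))]
    push_cast
    push_cast at hπ
    nlinarith [hδ1.le, hεpos.le, (by exact_mod_cast hi1 : (1:ℝ) ≤ (i:ℝ))]
  have hz1 : z ≤ 1 := by
    have := leftpt_add_le hnc hupd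
    rw [← hzdef] at this
    linarith
  set y := z - r with hydef
  have hy : y ∈ Set.Icc (0:ℝ) 1 := by
    rw [Set.mem_Icc]
    constructor
    · rw [hydef]; linarith [hz0, hεpos]
    · rw [hydef]; linarith
  obtain ⟨-, hdb, -⟩ := hdOn y hy r hrpos
  have hb1 : Metric.ball y r = Set.Ioo (z - ε) z := by
    rw [Real.ball_eq_Ioo, hydef, hrdef]
    congr 1 <;> ring
  have hstep1 : ν (Metric.ball y r ∩ Set.Icc 0 1) ≤ ν (Set.Ioo (z - ε) z) := by
    refine measure_mono ?_
    rw [hb1]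
    exact Set.inter_subset_left
  have hDne0 : D ≠ 0 := by
    intro h0; rw [h0] at hD1; exact (by norm_num : ¬ ((1:ℝ≥0∞) ≤ 0)) hD1
  have hstep2 : D⁻¹ * ν (Metric.ball y (2*r) ∩ Set.Icc 0 1)
      ≤ ν (Metric.ball y r ∩ Set.Icc 0 1) := by
    calc D⁻¹ * ν (Metric.ball y (2*r) ∩ Set.Icc 0 1)
        ≤ D⁻¹ * (D * ν (Metric.ball y r ∩ Set.Icc 0 1)) := mul_le_mul_right hdb _
      _ = (D⁻¹ * D) * ν (Metric.ball y r ∩ Set.Icc 0 1) := by rw [mul_assoc]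
      _ = ν (Metric.ball y r ∩ Set.Icc 0 1) := by
          rw [ENNReal.inv_mul_cancel hDne0 hDlt.ne, one_mul]
  have hmid : Set.Ico z (z + r) ∩ uniformCantorSet n c ⊆ Metric.ball y (2*r) ∩ Set.Icc 0 1 := by
    rintro x ⟨hx1, hx2⟩
    rw [Set.mem_Ico] at hx1
    refine ⟨?_, cantor_subset_Icc hx2⟩
    rw [Metric.mem_ball, Real.dist_eq, abs_lt]
    constructor
    · rw [hydef]; linarith [hx1.1]
    · rw [hydef]; linarith [hx1.2]
  have hrestr : ν (Set.Ico z (z + r) ∩ uniformCantorSet n c) = μ (Set.Ico z (z + r)) := by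
    rw [← hext, Measure.restrict_apply measurableSet_Ico]
  have hstep3 : μ (Set.Ico z (z + r)) ≤ ν (Metric.ball y (2*r) ∩ Set.Icc 0 1) := by
    rw [← hrestr]
    exact measure_mono hmid
  -- measure of the initial piece of the right component
  have hmuIco : ENNReal.ofReal ((n (k+1):ℝ) * c (k+1) / 16)
      * μ (cInt n c (Function.update w (k+1) (i+1)) (k+1)) ≤ μ (Set.Ico z (z + r)) := by
    have hεδk : ε = c (k+1) * cdelta n c k := ceps_succ k
    rcases le_or_gt r (cdelta n c (k+1)) with hr | hr
    · have hA := claimA hnc hμ hp hk₀ huni (by omega : k₀ ≤ k+1) hupd hrpos hr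
      rw [← hzdef] at hA
      refine le_trans (mul_le_mul_left (ENNReal.ofReal_le_ofReal ?_) _) hA
      rw [div_le_div_iff₀ (by norm_num) (by positivity)]
      have hnd := n_cdelta_le hnc k
      rw [hrdef, hεδk]
      nlinarith
    · have hB := mu_half hnc hμ hp hk₀ huni (by omega : k₀ ≤ k+1) hupd
      rw [← hzdef] at hB
      have hmono : μ (Set.Ico z (z + cdelta n c (k+1))) ≤ μ (Set.Ico z (z + r)) :=
        measure_mono (Set.Ico_subset_Ico le_rfl (by linarith))
      refine le_trans (mul_le_mul_left (ENNReal.ofReal_le_ofReal ?_) _) (hB.trans hmono)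
      rw [div_le_div_iff₀ (by norm_num) (by norm_num)]
      nlinarith
  calc D⁻¹ * ENNReal.ofReal ((n (k+1):ℝ) * c (k+1) / 16)
        * μ (cInt n c (Function.update w (k+1) (i+1)) (k+1))
      = D⁻¹ * (ENNReal.ofReal ((n (k+1):ℝ) * c (k+1) / 16)
          * μ (cInt n c (Function.update w (k+1) (i+1)) (k+1))) := by rw [mul_assoc]
    _ ≤ D⁻¹ * μ (Set.Ico z (z + r)) := mul_le_mul_right hmuIco _
    _ ≤ D⁻¹ * ν (Metric.ball y (2*r) ∩ Set.Icc 0 1) := mul_le_mul_right hstep3 _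
    _ ≤ ν (Metric.ball y r ∩ Set.Icc 0 1) := hstep2
    _ ≤ ν (Set.Ioo (z - ε) z) := hstep1

end geo3
section geo4
variable {n : ℕ → ℕ} {c : ℕ → ℝ} {p : ℕ → ℕ → ℝ} {μ ν : Measure ℝ} {k₀ : ℕ} {D : ℝ≥0∞}
variable (hnc : CantorParams n c) (hμ : MatchingMeasure n c p μ) (hp : MatchingSeq n p)
  (hk₀ : 1 ≤ k₀)
  (huni : ∀ k, k₀ ≤ k → ∀ i, 1 ≤ i → i ≤ n k → p k i = 1 / (n k : ℝ))
  (hD1 : 1 ≤ D) (hDlt : D < ⊤) (hdOn : DoublingOn ν (Set.Icc 0 1) D)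
  (hext : ν.restrict (uniformCantorSet n c) = μ)
include hnc hμ hp hk₀ huni hD1 hDlt hdOn hext

lemma main_ind (m : ℕ) : ∀ k, k₀ ≤ k → ∀ w : ℕ → ℕ, IsWord n w k →
    (1 + D⁻¹ * ENNReal.ofReal ((∑ t ∈ Finset.Ioc k (k+m), ((n t:ℝ) - 1) * c t) / 16))
        * μ (cInt n c w k) ≤ ν (cInt n c w k) := by
  induction m with
  | zero =>
      intro k hk w hw
      simp only [Nat.add_zero, Finset.Ioc_self, Finset.sum_empty, zero_div,
        ENNReal.ofReal_zero, mul_zero, add_zero, one_mul]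
      have hmC : MeasurableSet (cInt n c w k) := measurableSet_Icc
      have : μ (cInt n c w k) = ν (cInt n c w k ∩ uniformCantorSet n c) := by
        rw [← hext, Measure.restrict_apply hmC]
      rw [this]
      exact measure_mono Set.inter_subset_left
  | succ m ih =>
      intro k hk w hw
      set N := n (k+1) with hNdef
      have hN2 : 2 ≤ N := (hnc (k+1) (by omega)).1
      obtain ⟨M, hM⟩ : ∃ M, N = M + 1 := ⟨N - 1, by omega⟩
      have hM1 : 1 ≤ M := by omega
      have hMR : ((N:ℝ) - 1) = (M:ℝ) := by rw [hM]; push_cast; ring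
      have hcpos := (hnc (k+1) (by omega)).2.1
      have hNR : (2:ℝ) ≤ (N:ℝ) := by exact_mod_cast hN2
      have hNpos : (0:ℝ) < (N:ℝ) := by linarith
      set z := leftpt n c w k with hzdef
      set q := cdelta n c (k+1) + ceps n c (k+1) with hqdef
      have hqpos : 0 < q := pi_pos hnc k
      have hδ1 := cdelta_pos hnc (k+1)
      have hεpos := ceps_pos hnc k
      have hkey : (N:ℝ) * cdelta n c (k+1) + ((N:ℝ) - 1) * ceps n c (k+1) = cdelta n c k :=
        key_id hnc k
      set C : ℕ → Set ℝ := fun i => cInt n c (Function.update w (k+1) i) (k+1) with hCdef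
      set G : ℕ → Set ℝ := fun i =>
        Set.Ioo (leftpt n c (Function.update w (k+1) (i+1)) (k+1) - ceps n c (k+1))
          (leftpt n c (Function.update w (k+1) (i+1)) (k+1)) with hGdef
      set f : ℕ → Set ℝ := fun i => if i = N then C i else C i ∪ G i with hfdef
      have hCband : ∀ i : ℕ, C i ⊆ Set.Ico (z + ((i:ℝ)-1)*q) (z + (i:ℝ)*q) :=
        fun i => child_subset_band hnc k i
      have hGband : ∀ i : ℕ, G i ⊆ Set.Ico (z + ((i:ℝ)-1)*q) (z + (i:ℝ)*q) := by
        intro i x hx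
        simp only [hGdef, Set.mem_Ioo, leftpt_update] at hx
        rw [Set.mem_Ico]
        obtain ⟨h1, h2⟩ := hx
        push_cast at h1 h2
        rw [← hzdef, ← hqdef] at h1 h2
        constructor
        · have : ceps n c (k+1) ≤ q := by rw [hqdef]; linarith
          nlinarith
        · nlinarith
      have hfband : ∀ i : ℕ, f i ⊆ Set.Ico (z + ((i:ℝ)-1)*q) (z + (i:ℝ)*q) := by
        intro i
        simp only [hfdef]
        by_cases hiN : i = N
        · rw [if_pos hiN]; exact hCband i
        · rw [if_neg hiN]; exact Set.union_subset (hCband i) (hGband i)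
      have hfdisj : ((Finset.Icc 1 N : Finset ℕ) : Set ℕ).PairwiseDisjoint f :=
        Set.PairwiseDisjoint.mono ((bands_pd z q).subset (Set.subset_univ _)) hfband
      have hfmeas : ∀ i ∈ Finset.Icc 1 N, MeasurableSet (f i) := by
        intro i _
        simp only [hfdef]
        by_cases hiN : i = N
        · rw [if_pos hiN]; exact measurableSet_Icc
        · rw [if_neg hiN]; exact measurableSet_Icc.union measurableSet_Ioo
      have hNq : ((N:ℝ) - 1) * q = cdelta n c k - cdelta n c (k+1) := by
        rw [hqdef]; nlinarith [hkey]
      have hfsub : ∀ i ∈ Finset.Icc 1 N, f i ⊆ cInt n c w k := by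
        intro i hi
        rw [Finset.mem_Icc] at hi
        have hi1 : (1:ℝ) ≤ (i:ℝ) := by exact_mod_cast hi.1
        have hiNR : (i:ℝ) ≤ (N:ℝ) := by exact_mod_cast hi.2
        by_cases hiN : i = N
        · simp only [hfdef, if_pos hiN]
          intro x hx
          simp only [hCdef, cInt, Set.mem_Icc, leftpt_update] at hx
          rw [cInt, Set.mem_Icc, ← hzdef]
          have hIR : (i:ℝ) = (N:ℝ) := by rw [hiN]
          rw [← hqdef] at hx
          constructor
          · nlinarith [hx.1, hqpos]
          · nlinarith [hx.2, hqpos]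
        · have hiM : (i:ℝ) ≤ (N:ℝ) - 1 := by
            have : i ≤ M := by omega
            rw [hMR]; exact_mod_cast this
          refine (hfband i).trans ?_
          intro x hx
          rw [Set.mem_Ico] at hx
          rw [cInt, Set.mem_Icc, ← hzdef]
          constructor
          · nlinarith [hx.1, hqpos]
          · have h3 : (i:ℝ) * q ≤ ((N:ℝ) - 1) * q := by nlinarith
            nlinarith [hx.2, hδ1]
      have hsumf := sum_meas_le (ρ := ν) hfmeas hfdisj hfsub
      have hfsplit : ∀ i ∈ Finset.Icc 1 M, ν (f i) = ν (C i) + ν (G i) := by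
        intro i hi
        rw [Finset.mem_Icc] at hi
        have hiN : i ≠ N := by omega
        have hdCG : Disjoint (C i) (G i) := by
          rw [Set.disjoint_left]
          intro x hxC hxG
          simp only [hCdef, cInt, Set.mem_Icc, leftpt_update] at hxC
          simp only [hGdef, Set.mem_Ioo, leftpt_update] at hxG
          have h1 := hxC.2
          have h2 := hxG.1
          push_cast at h1 h2
          rw [← hqdef] at h1 h2
          nlinarith
        simp only [hfdef, if_neg hiN]
        exact measure_union hdCG measurableSet_Ioo
      -- lower bounds for components (induction hypothesis) and gaps
      set S' := ∑ t ∈ Finset.Ioc (k+1) (k+1+m), ((n t:ℝ) - 1) * c t with hS'def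
      have hS'nn : 0 ≤ S' := by
        refine Finset.sum_nonneg fun t ht => ?_
        rw [Finset.mem_Ioc] at ht
        have h2t : 2 ≤ n t := (hnc t (by omega)).1
        have := (hnc t (by omega)).2.1
        have : (1:ℝ) ≤ (n t:ℝ) := by exact_mod_cast Nat.one_le_of_lt h2t
        nlinarith [(hnc t (by omega)).2.1]
      have hC_low : ∀ i ∈ Finset.Icc 1 N,
          (1 + D⁻¹ * ENNReal.ofReal (S' / 16)) * μ (C i) ≤ ν (C i) := by
        intro i hi
        rw [Finset.mem_Icc] at hi
        have := ih (k+1) (by omega) (Function.update w (k+1) i) (isWord_update hw hi.1 hi.2)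
        rwa [← hS'def] at this
      have hCval : ∀ i ∈ Finset.Icc 1 M,
          μ (C (i+1)) = ENNReal.ofReal (1/(N:ℝ)) * μ (cInt n c w k) := by
        intro i hi
        rw [Finset.mem_Icc] at hi
        simp only [hCdef]
        rw [mu_child hμ hw (by omega) (by omega), huni (k+1) (by omega) (i+1) (by omega) (by omega)]
      have hG_low : ∀ i ∈ Finset.Icc 1 M,
          D⁻¹ * ENNReal.ofReal ((N:ℝ) * c (k+1) / 16)
            * (ENNReal.ofReal (1/(N:ℝ)) * μ (cInt n c w k)) ≤ ν (G i) := by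
        intro i hi
        rw [Finset.mem_Icc] at hi
        have := nu_gap hnc hμ hp hk₀ huni hD1 hDlt hdOn hext hk hw hi.1 (by omega)
        rw [show cInt n c (Function.update w (k+1) (i+1)) (k+1) = C (i+1) from rfl] at this
        rw [hCval i (by rw [Finset.mem_Icc]; exact hi)] at this
        exact this
      -- sum the estimates
      have hA : (1 + D⁻¹ * ENNReal.ofReal (S' / 16)) * μ (cInt n c w k)
          ≤ ∑ i ∈ Finset.Icc 1 N, ν (C i) := by
        rw [← mu_children_sum hμ hp hw, Finset.mul_sum]
        exact Finset.sum_le_sum hC_low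
      have hofr : ENNReal.ofReal ((M:ℝ)) * (ENNReal.ofReal ((N:ℝ) * c (k+1) / 16)
          * ENNReal.ofReal (1/(N:ℝ)))
            = ENNReal.ofReal ((M:ℝ) * c (k+1) / 16) := by
        rw [← ENNReal.ofReal_mul (by positivity), ← ENNReal.ofReal_mul (by positivity)]
        congr 1
        field_simp
      have hB : D⁻¹ * ENNReal.ofReal ((M:ℝ) * c (k+1) / 16) * μ (cInt n c w k)
          ≤ ∑ i ∈ Finset.Icc 1 M, ν (G i) := by
        refine le_trans ?_ (Finset.sum_le_sum hG_low)
        rw [Finset.sum_const, Nat.card_Icc, Nat.add_sub_cancel, nsmul_eq_mul]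
        rw [← ENNReal.ofReal_natCast M, ← hofr]
        ring_nf
        exact le_of_eq (by ring)
      have hsum2 : ∑ i ∈ Finset.Icc 1 N, ν (f i)
          = (∑ i ∈ Finset.Icc 1 N, ν (C i)) + ∑ i ∈ Finset.Icc 1 M, ν (G i) := by
        rw [hM]
        rw [Finset.sum_Icc_succ_top (by omega : 1 ≤ M+1), Finset.sum_Icc_succ_top (by omega : 1 ≤ M+1)]
        rw [Finset.sum_congr rfl hfsplit, Finset.sum_add_distrib]
        have hfM : f (M+1) = C (M+1) := by simp [hfdef, hM]
        rw [hfM]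
        ring
      -- index-set splitting of the coefficient sum
      have hsplitIdx : Finset.Ioc k (k+(m+1)) = insert (k+1) (Finset.Ioc (k+1) (k+1+m)) := by
        ext t
        simp only [Finset.mem_Ioc, Finset.mem_insert]
        omega
      have hcoeff : (1:ℝ≥0∞) + D⁻¹ * ENNReal.ofReal
            ((∑ t ∈ Finset.Ioc k (k+(m+1)), ((n t:ℝ) - 1) * c t) / 16)
          = (1 + D⁻¹ * ENNReal.ofReal (S'/16))
            + D⁻¹ * ENNReal.ofReal ((M:ℝ) * c (k+1) / 16) := by
        rw [hsplitIdx, Finset.sum_insert (by simp), ← hS'def, hMR, add_div,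
          ENNReal.ofReal_add (by positivity) (by positivity), mul_add]
        ring
      calc (1 + D⁻¹ * ENNReal.ofReal
            ((∑ t ∈ Finset.Ioc k (k+(m+1)), ((n t:ℝ) - 1) * c t) / 16)) * μ (cInt n c w k)
          = (1 + D⁻¹ * ENNReal.ofReal (S'/16)) * μ (cInt n c w k)
            + D⁻¹ * ENNReal.ofReal ((M:ℝ) * c (k+1) / 16) * μ (cInt n c w k) := by
            rw [hcoeff, add_mul]
        _ ≤ (∑ i ∈ Finset.Icc 1 N, ν (C i)) + ∑ i ∈ Finset.Icc 1 M, ν (G i) :=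
            add_le_add hA hB
        _ = ∑ i ∈ Finset.Icc 1 N, ν (f i) := hsum2.symm
        _ ≤ ν (cInt n c w k) := hsumf

end geo4

theorem stmt11 (n : ℕ → ℕ) (c : ℕ → ℝ) (p : ℕ → ℕ → ℝ) (μ ν : Measure ℝ)
    (h : CantorParams n c) (hp : MatchingSeq n p)
    (huni : ∃ k₀, 1 ≤ k₀ ∧ ∀ k, k₀ ≤ k → ∀ i, 1 ≤ i → i ≤ n k → p k i = 1 / (n k : ℝ))
    (hμ : MatchingMeasure n c p μ)
    (hν : ν (Set.Icc (0 : ℝ) 1)ᶜ = 0)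
    (hdbl : ∃ D : ℝ≥0∞, 1 ≤ D ∧ D < ⊤ ∧ DoublingOn ν (Set.Icc 0 1) D)
    (hext : ν.restrict (uniformCantorSet n c) = μ) :
    Summable (fun k => (n k : ℝ) * c k) := by
  obtain ⟨k₀, hk₀1, huni⟩ := huni
  obtain ⟨D, hD1, hDlt, hdOn⟩ := hdbl
  have hDne0 : D ≠ 0 := by
    intro h0; rw [h0] at hD1; exact (by norm_num : ¬ ((1:ℝ≥0∞) ≤ 0)) hD1
  -- finiteness of ν on [0,1]
  obtain ⟨-, -, hVlt⟩ := hdOn 0 (by norm_num) 1 one_pos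
  have hball : Metric.ball (0:ℝ) (2*1) ∩ Set.Icc 0 1 = Set.Icc 0 1 := by
    refine Set.inter_eq_self_of_subset_right ?_
    intro x hx
    rw [Set.mem_Icc] at hx
    rw [Metric.mem_ball, Real.dist_eq, abs_lt]
    constructor <;> linarith [hx.1, hx.2]
  rw [hball] at hVlt
  have hVany : ∀ S : Set ℝ, ν S ≤ ν (Set.Icc 0 1) := by
    intro S
    have hsub : S ⊆ Set.Icc 0 1 ∪ (Set.Icc (0:ℝ) 1)ᶜ := by
      intro x _
      by_cases hx : x ∈ Set.Icc (0:ℝ) 1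
      · exact Or.inl hx
      · exact Or.inr hx
    calc ν S ≤ ν (Set.Icc 0 1 ∪ (Set.Icc (0:ℝ) 1)ᶜ) := measure_mono hsub
      _ ≤ ν (Set.Icc 0 1) + ν (Set.Icc (0:ℝ) 1)ᶜ := measure_union_le _ _
      _ = ν (Set.Icc 0 1) := by rw [hν, add_zero]
  -- base word and its measure
  have hw1 : IsWord n (fun _ => 1) k₀ := by
    intro j hj1 _
    exact ⟨le_rfl, show (1:ℕ) ≤ n j by have := (h j hj1).1; omega⟩
  set μ₀ := μ (cInt n c (fun _ => 1) k₀) with hμ₀def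
  have hμ₀pos : 0 < μ₀ := mu_pos hμ hp hw1
  have hμ₀top : μ₀ ≠ ⊤ := mu_ne_top hμ _
  set W := D * ν (Set.Icc (0:ℝ) 1) / μ₀ with hWdef
  have hWtop : W ≠ ⊤ :=
    (ENNReal.div_lt_top (ENNReal.mul_ne_top hDlt.ne hVlt.ne) hμ₀pos.ne').ne
  have hsum_nn : ∀ m, 0 ≤ ∑ t ∈ Finset.Ioc k₀ (k₀+m), ((n t:ℝ) - 1) * c t := by
    intro m
    refine Finset.sum_nonneg fun t ht => ?_
    rw [Finset.mem_Ioc] at ht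
    have h2t : 2 ≤ n t := (h t (by omega)).1
    have hcn := (h t (by omega)).2.1
    have : (1:ℝ) ≤ (n t:ℝ) := by exact_mod_cast Nat.one_le_of_lt h2t
    nlinarith
  have hkey : ∀ m, (∑ t ∈ Finset.Ioc k₀ (k₀+m), ((n t:ℝ) - 1) * c t) ≤ 16 * W.toReal := by
    intro m
    have H := main_ind h hμ hp hk₀1 huni hD1 hDlt hdOn hext m k₀ le_rfl (fun _ => 1) hw1
    set X := ENNReal.ofReal ((∑ t ∈ Finset.Ioc k₀ (k₀+m), ((n t:ℝ) - 1) * c t) / 16) with hXdef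
    have h1 : D⁻¹ * X * μ₀ ≤ ν (Set.Icc 0 1) := by
      calc D⁻¹ * X * μ₀ ≤ (1 + D⁻¹ * X) * μ₀ := by
            exact mul_le_mul_left le_add_self _
        _ ≤ ν (cInt n c (fun _ => 1) k₀) := H
        _ ≤ ν (Set.Icc 0 1) := hVany _
    have h2 : X * μ₀ ≤ D * ν (Set.Icc 0 1) := by
      calc X * μ₀ = D * (D⁻¹ * X * μ₀) := by
            rw [← mul_assoc, ← mul_assoc, ENNReal.mul_inv_cancel hDne0 hDlt.ne, one_mul]
        _ ≤ D * ν (Set.Icc 0 1) := mul_le_mul_right h1 _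
    have h3 : X ≤ W := by
      rw [hWdef]
      exact (ENNReal.le_div_iff_mul_le (Or.inl hμ₀pos.ne') (Or.inl hμ₀top)).mpr h2
    have h4 := ENNReal.toReal_mono hWtop h3
    rw [hXdef, ENNReal.toReal_ofReal (by linarith [hsum_nn m])] at h4
    linarith
  -- conclude summability
  refine (summable_nat_add_iff (k₀+1)).mp ?_
  refine summable_of_sum_range_le (c := 32 * W.toReal) (fun i => ?_) (fun m => ?_)
  · have h2t : 2 ≤ n (i + (k₀+1)) := (h (i + (k₀+1)) (by omega)).1
    have hcn := (h (i + (k₀+1)) (by omega)).2.1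
    have : (0:ℝ) ≤ (n (i + (k₀+1)):ℝ) := by positivity
    nlinarith
  · have hstep : ∀ i ∈ Finset.range m,
        (n (i + (k₀+1)) : ℝ) * c (i + (k₀+1))
          ≤ 2 * (((n ((k₀+1) + i):ℝ) - 1) * c ((k₀+1) + i)) := by
      intro i _
      rw [add_comm (k₀+1) i]
      have h2t : 2 ≤ n (i + (k₀+1)) := (h (i + (k₀+1)) (by omega)).1
      have hcn := (h (i + (k₀+1)) (by omega)).2.1
      have hR : (2:ℝ) ≤ (n (i + (k₀+1)):ℝ) := by exact_mod_cast h2t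
      nlinarith
    have hconv : ∑ t ∈ Finset.Ioc k₀ (k₀+m), ((n t:ℝ) - 1) * c t
        = ∑ i ∈ Finset.range m, (((n ((k₀+1) + i):ℝ) - 1) * c ((k₀+1) + i)) := by
      rw [← Finset.Icc_add_one_left_eq_Ioc, ← Finset.Ico_add_one_right_eq_Icc, Finset.sum_Ico_eq_sum_range]
      have : k₀ + m + 1 - (k₀ + 1) = m := by omega
      rw [this]
    calc ∑ i ∈ Finset.range m, (n (i + (k₀+1)) : ℝ) * c (i + (k₀+1))
        ≤ ∑ i ∈ Finset.range m, 2 * (((n ((k₀+1) + i):ℝ) - 1) * c ((k₀+1) + i)) :=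
          Finset.sum_le_sum hstep
      _ = 2 * ∑ i ∈ Finset.range m, (((n ((k₀+1) + i):ℝ) - 1) * c ((k₀+1) + i)) := by
          rw [Finset.mul_sum]
      _ = 2 * ∑ t ∈ Finset.Ioc k₀ (k₀+m), ((n t:ℝ) - 1) * c t := by rw [hconv]
      _ ≤ 2 * (16 * W.toReal) := by linarith [hkey m]
      _ = 32 * W.toReal := by ring
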